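/- Let (X, d_X) and (Y, d_Y) be non-Archimedean metric spaces. For any maps f, g : X → Y, the following inequalities hold: ρ_H(f, g) ≤ ρ_s(f, g) ≤ max{θ_{f,g}(ρ_H(f, g))⁺, ρ_H(f, g)}, and θ_{f,g}(ρ_H(f, g))⁺ ≤ ρ_H(f, g) + min{dis f, dis g}. -/

import Mathlib

open scoped ENNReal

/-- The graph of a map `f : X → Y`, as a subset of `X × Y`. -/
def graphOf {X Y : Type*} (f : X → Y) : Set (X × Y) :=
  Set.range fun x => (x, f x)

/-- `ρ_H(f,g)`: the Hausdorff distance between the graphs of `f` and `g` in the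
product `X × Y` equipped with the sup-metric (which is the product metric in Mathlib). -/
noncomputable def rhoH {X Y : Type*} [MetricSpace X] [MetricSpace Y] (f g : X → Y) : ℝ≥0∞ :=
  EMetric.hausdorffEdist (graphOf f) (graphOf g)

/-- `ρ_s(f,g) = sup_x d_Y(f x, g x)`. -/
noncomputable def rhoS {X Y : Type*} [MetricSpace X] [MetricSpace Y] (f g : X → Y) : ℝ≥0∞ :=
  ⨆ x : X, edist (f x) (g x)

/-- `θ_f(ε) = sup { d_Y(f x₁, f x₂) : d_X(x₁, x₂) < ε }`. -/
noncomputable def theta {X Y : Type*} [MetricSpace X] [MetricSpace Y]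
    (f : X → Y) (ε : ℝ≥0∞) : ℝ≥0∞ :=
  ⨆ (x₁ : X) (x₂ : X) (_ : edist x₁ x₂ < ε), edist (f x₁) (f x₂)

/-- `θ_{f,g}(a)⁺`, the right-hand limit of `ε ↦ min (θ_f ε) (θ_g ε)` at `a`; since this
function is nondecreasing, the right-hand limit equals the infimum over `ε > a`. -/
noncomputable def thetaPlus {X Y : Type*} [MetricSpace X] [MetricSpace Y]
    (f g : X → Y) (a : ℝ≥0∞) : ℝ≥0∞ :=
  ⨅ (ε : ℝ≥0∞) (_ : a < ε), min (theta f ε) (theta g ε)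

/-- The distorsion `dis f = sup_{x₁,x₂} |d_Y(f x₁, f x₂) − d_X(x₁, x₂)|`,
with the absolute difference expressed in `ℝ≥0∞` via truncated subtraction. -/
noncomputable def disF {X Y : Type*} [MetricSpace X] [MetricSpace Y] (f : X → Y) : ℝ≥0∞ :=
  ⨆ (x₁ : X) (x₂ : X),
    max (edist (f x₁) (f x₂) - edist x₁ x₂) (edist x₁ x₂ - edist (f x₁) (f x₂))

lemma edist_na {Y : Type*} [MetricSpace Y]
    (h : ∀ x y z : Y, dist x z ≤ max (dist x y) (dist y z)) (a b c : Y) :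
    edist a c ≤ max (edist a b) (edist b c) := by
  have hm : Monotone ENNReal.ofReal := fun _ _ h => ENNReal.ofReal_le_ofReal h
  calc edist a c = ENNReal.ofReal (dist a c) := edist_dist _ _
    _ ≤ ENNReal.ofReal (max (dist a b) (dist b c)) := ENNReal.ofReal_le_ofReal (h a b c)
    _ = max (ENNReal.ofReal (dist a b)) (ENNReal.ofReal (dist b c)) := hm.map_max
    _ = max (edist a b) (edist b c) := by rw [← edist_dist, ← edist_dist]

lemma theta_mono {X Y : Type*} [MetricSpace X] [MetricSpace Y] (f : X → Y)
    {ε ε' : ℝ≥0∞} (h : ε ≤ ε') : theta f ε ≤ theta f ε' := by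
  refine iSup_le fun x₁ => iSup_le fun x₂ => iSup_le fun hlt => ?_
  exact le_iSup_of_le x₁ (le_iSup_of_le x₂ (le_iSup_of_le (lt_of_lt_of_le hlt h) le_rfl))

lemma le_theta {X Y : Type*} [MetricSpace X] [MetricSpace Y] (f : X → Y)
    {ε : ℝ≥0∞} {x₁ x₂ : X} (h : edist x₁ x₂ < ε) : edist (f x₁) (f x₂) ≤ theta f ε :=
  le_iSup_of_le x₁ (le_iSup_of_le x₂ (le_iSup_of_le h le_rfl))

/-- key pointwise estimate: for `ε > ρ_H`, `d(f x, g x) ≤ max (θ_g ε) ε`. -/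
lemma key {X Y : Type*} [MetricSpace X] [MetricSpace Y]
    (hnaY : ∀ x y z : Y, dist x z ≤ max (dist x y) (dist y z))
    (f g : X → Y) {ε : ℝ≥0∞} (hε : rhoH f g < ε) (x : X) :
    edist (f x) (g x) ≤ max (theta g ε) ε := by
  have h1 : EMetric.infEdist (x, f x) (graphOf g) < ε :=
    lt_of_le_of_lt (EMetric.infEdist_le_hausdorffEdist_of_mem (s := graphOf f) ⟨x, rfl⟩) hε
  obtain ⟨y, hy, hlt⟩ := EMetric.infEdist_lt_iff.1 h1
  obtain ⟨x', rfl⟩ := hy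
  rw [Prod.edist_eq] at hlt
  simp only [sup_lt_iff] at hlt
  have h2 : edist (f x) (g x') ≤ ε := le_of_lt hlt.2
  have h3 : edist (g x') (g x) ≤ theta g ε := by
    apply le_theta
    rw [edist_comm]
    exact hlt.1
  calc edist (f x) (g x) ≤ max (edist (f x) (g x')) (edist (g x') (g x)) := edist_na hnaY _ _ _
    _ ≤ max (theta g ε) ε := max_le (le_max_of_le_right h2) (le_max_of_le_left h3)

lemma theta_le_add_dis {X Y : Type*} [MetricSpace X] [MetricSpace Y] (f : X → Y)
    (ε : ℝ≥0∞) : theta f ε ≤ ε + disF f := by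
  refine iSup_le fun x₁ => iSup_le fun x₂ => iSup_le fun hlt => ?_
  calc edist (f x₁) (f x₂) ≤ edist x₁ x₂ + (edist (f x₁) (f x₂) - edist x₁ x₂) := le_add_tsub
    _ ≤ ε + disF f := by
        refine add_le_add hlt.le ?_
        exact le_iSup_of_le x₁ (le_iSup_of_le x₂ (le_max_left _ _))

theorem stmt_10 {X Y : Type*} [MetricSpace X] [MetricSpace Y]
    (hnaX : ∀ x y z : X, dist x z ≤ max (dist x y) (dist y z))
    (hnaY : ∀ x y z : Y, dist x z ≤ max (dist x y) (dist y z))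
    (f g : X → Y) :
    rhoH f g ≤ rhoS f g ∧
    rhoS f g ≤ max (thetaPlus f g (rhoH f g)) (rhoH f g) ∧
    thetaPlus f g (rhoH f g) ≤ rhoH f g + min (disF f) (disF g) := by
  set a := rhoH f g with ha
  refine ⟨?_, ?_, ?_⟩
  · -- ρ_H ≤ ρ_s
    refine EMetric.hausdorffEdist_le_of_mem_edist ?_ ?_
    · rintro p ⟨x, rfl⟩
      exact ⟨(x, g x), ⟨x, rfl⟩, by
        rw [Prod.edist_eq]; simp only [edist_self]
        exact sup_le zero_le (le_iSup (fun x => edist (f x) (g x)) x)⟩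
    · rintro p ⟨x, rfl⟩
      refine ⟨(x, f x), ⟨x, rfl⟩, ?_⟩
      rw [Prod.edist_eq]; simp only [edist_self]
      rw [edist_comm]
      exact sup_le zero_le (le_iSup (fun x => edist (f x) (g x)) x)
  · -- ρ_s ≤ max θ⁺ ρ_H
    have main : ∀ ε, a < ε → rhoS f g ≤ max (min (theta f ε) (theta g ε)) ε := by
      intro ε hε
      refine iSup_le fun x => ?_
      have hg := key hnaY f g hε x
      have hf : edist (f x) (g x) ≤ max (theta f ε) ε := by
        have := key hnaY g f (by rw [rhoH, EMetric.hausdorffEdist, EMetric.hausdorffEdist_comm]; exact hε) x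
        rwa [edist_comm]
      rcases le_total (theta f ε) (theta g ε) with h | h
      · rw [min_eq_left h]; exact hf
      · rw [min_eq_right h]; exact hg
    refine le_of_forall_gt_imp_ge_of_dense fun c hc => ?_
    rw [max_lt_iff] at hc
    obtain ⟨hc1, hc2⟩ := hc
    rw [thetaPlus] at hc1
    rw [iInf_lt_iff] at hc1
    obtain ⟨ε, hε⟩ := hc1
    rw [iInf_lt_iff] at hε
    obtain ⟨hεa, hεc⟩ := hε
    set ε' := min ε c with hε'
    have hlt : a < ε' := lt_min hεa hc2
    have h1 : min (theta f ε') (theta g ε') ≤ c :=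
      le_trans (min_le_min (theta_mono f (min_le_left _ _)) (theta_mono g (min_le_left _ _)))
        hεc.le
    calc rhoS f g ≤ max (min (theta f ε') (theta g ε')) ε' := main ε' hlt
      _ ≤ c := max_le h1 (min_le_right _ _)
  · -- θ⁺ ≤ ρ_H + min dis
    have step : ∀ h : X → Y, (∀ ε, a < ε → min (theta f ε) (theta g ε) ≤ theta h ε) →
        thetaPlus f g a ≤ a + disF h := by
      intro h hmin
      refine ENNReal.le_of_forall_pos_le_add fun δ hδ htop => ?_
      have haT : a ≠ ⊤ := fun hh => by simp [hh] at htop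
      have hδ' : (δ : ℝ≥0∞) ≠ 0 := by exact_mod_cast hδ.ne'
      have hlt : a < a + δ := ENNReal.lt_add_right haT hδ'
      calc thetaPlus f g a ≤ min (theta f (a + δ)) (theta g (a + δ)) :=
            iInf_le_of_le (a + δ) (iInf_le_of_le hlt le_rfl)
        _ ≤ theta h (a + δ) := hmin _ hlt
        _ ≤ (a + δ) + disF h := theta_le_add_dis h _
        _ = a + disF h + δ := by ring
    rcases le_total (disF f) (disF g) with h | h
    · rw [min_eq_left h]; exact step f fun ε _ => min_le_left _ _
    · rw [min_eq_right h]; exact step g fun ε _ => min_le_right _ _
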